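/- If N = p_1^{2a_1} p_2^{2a_2} ⋯ p_t^{2a_t} = m^2 is a quasiperfect number (where p_1, ..., p_t are distinct primes and a_1, ..., a_t are positive integers), then there exists an index j such that σ(p_j^{2a_j}) ≡ 3 (mod 8) and σ(p_j^{2a_j}) has no prime factor congruent to 5 or 7 modulo 8. -/

import Mathlib

/-- A positive integer `N` is quasiperfect if `σ(N) = 2N + 1`. -/
def Quasiperfect (N : ℕ) : Prop :=
  0 < N ∧ ArithmeticFunction.sigma 1 N = 2 * N + 1

/-- Any prime factor of `2m²+1` is `1` or `3` mod `8`. -/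
lemma aux_prime_dvd (m q : ℕ) (hq : q.Prime) (hd : q ∣ 2 * m ^ 2 + 1) :
    q % 8 = 1 ∨ q % 8 = 3 := by
  have hq2 : q ≠ 2 := by
    rintro rfl
    obtain ⟨c, hc⟩ := hd
    omega
  haveI : Fact q.Prime := ⟨hq⟩
  have h0 : ((2 * m ^ 2 + 1 : ℕ) : ZMod q) = 0 :=
    (ZMod.natCast_eq_zero_iff _ _).mpr hd
  push_cast at h0
  have hsq : IsSquare (-2 : ZMod q) := ⟨2 * m, by linear_combination -2 * h0⟩
  exact (ZMod.exists_sq_eq_neg_two_iff hq2).mp hsq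

/-- A positive number all of whose prime factors are `1` or `3` mod `8` is
itself `1` or `3` mod `8`. -/
lemma aux_closed : ∀ n : ℕ, 0 < n →
    (∀ q : ℕ, q.Prime → q ∣ n → q % 8 = 1 ∨ q % 8 = 3) → n % 8 = 1 ∨ n % 8 = 3 := by
  intro n
  induction n using Nat.strong_induction_on with
  | _ n ih =>
    intro hn h
    rcases eq_or_ne n 1 with rfl | h1
    · left; rfl
    · obtain ⟨q, hq, hqd⟩ := Nat.exists_prime_and_dvd h1
      obtain ⟨k, rfl⟩ := hqd
      have hk : 0 < k := by
        rcases Nat.eq_zero_or_pos k with rfl | hk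
        · simp at hn
        · exact hk
      have hklt : k < q * k := by
        calc k = 1 * k := (one_mul k).symm
        _ < q * k := (Nat.mul_lt_mul_right hk).mpr hq.one_lt
      have ihk := ih k hklt hk (fun r hr hrd => h r hr (Dvd.dvd.mul_left hrd q))
      have hq8 := h q hq ⟨k, rfl⟩
      rcases hq8 with h1' | h1' <;> rcases ihk with h2' | h2' <;>
        [left; right; right; left] <;> rw [Nat.mul_mod, h1', h2']

lemma two_pow_sum (n : ℕ) : ∑ k ∈ Finset.range n, 2 ^ k = 2 ^ n - 1 := by
  induction n with
  | zero => rfl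
  | succ n ih =>
    rw [Finset.sum_range_succ, ih, pow_succ]
    have : 0 < 2 ^ n := Nat.two_pow_pos n
    omega

theorem stmt_19 (t : ℕ) (p a : Fin t → ℕ) (N m : ℕ)
    (hp : ∀ i, (p i).Prime) (hinj : Function.Injective p)
    (ha : ∀ i, 0 < a i)
    (hN : N = ∏ i, p i ^ (2 * a i)) (hm : N = m ^ 2)
    (hq : Quasiperfect N) :
    ∃ j : Fin t, ArithmeticFunction.sigma 1 (p j ^ (2 * a j)) % 8 = 3 ∧
      ∀ q : ℕ, q.Prime → q ∣ ArithmeticFunction.sigma 1 (p j ^ (2 * a j)) →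
        q % 8 ≠ 5 ∧ q % 8 ≠ 7 := by
  have hσN : ArithmeticFunction.sigma 1 N = 2 * m ^ 2 + 1 := by
    rw [hq.2, hm]
  -- multiplicativity
  have hcop : (↑(Finset.univ : Finset (Fin t)) : Set (Fin t)).Pairwise
      (Function.onFun Nat.Coprime fun i => p i ^ (2 * a i)) := by
    intro i _ j _ hij
    exact ((Nat.coprime_primes (hp i) (hp j)).mpr
      (fun h => hij (hinj h))).pow _ _
  have hprod : ArithmeticFunction.sigma 1 N =
      ∏ i, ArithmeticFunction.sigma 1 (p i ^ (2 * a i)) := by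
    rw [hN]
    exact ArithmeticFunction.IsMultiplicative.map_prod _
      ArithmeticFunction.isMultiplicative_sigma Finset.univ hcop
  -- each factor divides 2m²+1
  have hdvd : ∀ i : Fin t, ArithmeticFunction.sigma 1 (p i ^ (2 * a i)) ∣ 2 * m ^ 2 + 1 := by
    intro i
    rw [← hσN, hprod]
    exact Finset.dvd_prod_of_mem _ (Finset.mem_univ i)
  have hprime8 : ∀ i : Fin t, ∀ q : ℕ, q.Prime →
      q ∣ ArithmeticFunction.sigma 1 (p i ^ (2 * a i)) → q % 8 = 1 ∨ q % 8 = 3 :=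
    fun i q hqp hqd => aux_prime_dvd m q hqp (hqd.trans (hdvd i))
  have hpos : ∀ i : Fin t, 0 < ArithmeticFunction.sigma 1 (p i ^ (2 * a i)) := by
    intro i
    rcases Nat.eq_zero_or_pos (ArithmeticFunction.sigma 1 (p i ^ (2 * a i))) with h0 | h
    · have := hdvd i
      rw [h0] at this
      omega
    · exact h
  have h13 : ∀ i : Fin t, ArithmeticFunction.sigma 1 (p i ^ (2 * a i)) % 8 = 1 ∨
      ArithmeticFunction.sigma 1 (p i ^ (2 * a i)) % 8 = 3 :=
    fun i => aux_closed _ (hpos i) (hprime8 i)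
  -- no p i equals 2
  have hne2 : ∀ i : Fin t, p i ≠ 2 := by
    intro i hpi
    have hval : ArithmeticFunction.sigma 1 (p i ^ (2 * a i)) = 2 ^ (2 * a i + 1) - 1 := by
      rw [ArithmeticFunction.sigma_one_apply_prime_pow (hp i), hpi, two_pow_sum]
    have hb : 2 * a i + 1 = (2 * a i - 2) + 3 := by have := ha i; omega
    have hpow : 2 ^ (2 * a i + 1) = 8 * 2 ^ (2 * a i - 2) := by
      rw [hb, pow_add]; ring
    have h1le : 1 ≤ 2 ^ (2 * a i - 2) := Nat.one_le_two_pow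
    have := h13 i
    rw [hval, hpow] at this
    omega
  -- m is odd
  have hmodd : m % 2 = 1 := by
    by_contra h
    have h2m : 2 ∣ m := by omega
    have h2N : 2 ∣ N := by
      rw [hm]
      exact dvd_pow h2m (by norm_num)
    rw [hN] at h2N
    obtain ⟨i, _, hi⟩ := (Nat.prime_two.prime.dvd_finset_prod_iff _).mp h2N
    have : (2 : ℕ) ∣ p i := Nat.Prime.dvd_of_dvd_pow Nat.prime_two hi
    exact hne2 i ((Nat.prime_dvd_prime_iff_eq Nat.prime_two (hp i)).mp this).symm
  -- so σ(N) ≡ 3 mod 8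
  have hσ3 : ArithmeticFunction.sigma 1 N % 8 = 3 := by
    obtain ⟨k, hk⟩ : ∃ k, m = 2 * k + 1 := ⟨m / 2, by omega⟩
    have hsq : m ^ 2 = 4 * (k * (k + 1)) + 1 := by rw [hk]; ring
    obtain ⟨j, hj⟩ := Nat.even_mul_succ_self k
    omega
  -- find the index
  by_contra hcon
  push_neg at hcon
  have hall1 : ∀ i : Fin t, ArithmeticFunction.sigma 1 (p i ^ (2 * a i)) % 8 = 1 := by
    intro i
    rcases h13 i with h | h
    · exact h
    · exfalso
      obtain ⟨q, hqp, hqd, himp⟩ := hcon i h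
      rcases hprime8 i q hqp hqd with h' | h' <;> simp [h'] at himp
  have : ArithmeticFunction.sigma 1 N % 8 = 1 := by
    rw [hprod, Finset.prod_nat_mod]
    rw [Finset.prod_congr rfl (fun i _ => hall1 i)]
    simp
  omega
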